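/- There exists a strongly regular graph with parameters (324, 152, 70, 72) that is vertex-transitive, i.e. for every pair of vertices u, v there is a graph automorphism mapping u to v. -/

import Mathlib

set_option maxRecDepth 100000
set_option maxHeartbeats 4000000

namespace SRG324

/-- The ambient group `Z₂² × Z₃⁴`. -/
abbrev V : Type := ZMod 2 × ZMod 2 × ZMod 3 × ZMod 3 × ZMod 3 × ZMod 3

/-- Bitmask encoding the 152-element partial difference set `D ⊆ V`. -/
def MASK : Nat := 27893162425601426216577360653750930905529471688973068542774207101865791067713362931871997116966126

/-- Membership test for `D` on encoded vertices. -/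
def fN (n : Nat) : Bool := Nat.beq (Nat.mod (Nat.shiftRight MASK n) 2) 1

/-- Mixed-radix encoding `V → Nat`. -/
def idxV (v : V) : Nat :=
  ((((v.1.val * 2 + v.2.1.val) * 3 + v.2.2.1.val) * 3 + v.2.2.2.1.val) * 3
      + v.2.2.2.2.1.val) * 3 + v.2.2.2.2.2.val

/-- Membership test for `D` on `V`. -/
def f (v : V) : Bool := fN (idxV v)

/-- Decoding `Nat → V`. -/
def decV (n : Nat) : V :=
  (((n / 162 : ℕ) : ZMod 2), ((n / 81 % 2 : ℕ) : ZMod 2), ((n / 27 % 3 : ℕ) : ZMod 3),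
    ((n / 9 % 3 : ℕ) : ZMod 3), ((n / 3 % 3 : ℕ) : ZMod 3), ((n % 3 : ℕ) : ZMod 3))

/-- Encoded subtraction, digit by digit. -/
def subD (m c i j : Nat) : Nat :=
  Nat.mod (Nat.sub (Nat.add (Nat.mod (Nat.div i c) m) m) (Nat.mod (Nat.div j c) m)) m

def subN (i j : Nat) : Nat :=
  Nat.add (Nat.mul (subD 2 162 i j) 162) (Nat.add (Nat.mul (subD 2 81 i j) 81)
    (Nat.add (Nat.mul (subD 3 27 i j) 27) (Nat.add (Nat.mul (subD 3 9 i j) 9)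
      (Nat.add (Nat.mul (subD 3 3 i j) 3) (subD 3 1 i j)))))

/- ### Basic facts, by computation -/

lemma h_f0 : f 0 = false := by decide
lemma h_symm : ∀ v : V, f (-v) = f v := by decide
lemma h_dec_idx' : ∀ v : V, decV (idxV v) = v := by decide
lemma h_idx_lt : ∀ v : V, idxV v < 324 := by decide
lemma h_card : Fintype.card V = 324 := by decide
lemma h_idx_dec : ∀ i : Fin 324, idxV (decV i.val) = i.val := by decide
lemma h_dec0 : decV 0 = (0 : V) := by decide

lemma val2_sub : ∀ a b : ZMod 2, (a - b).val = (a.val + 2 - b.val) % 2 := by decide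
lemma val3_sub : ∀ a b : ZMod 3, (a - b).val = (a.val + 3 - b.val) % 3 := by decide

lemma dig1 : ∀ v : V, idxV v / 162 % 2 = v.1.val := by decide
lemma dig2 : ∀ v : V, idxV v / 81 % 2 = v.2.1.val := by decide
lemma dig3 : ∀ v : V, idxV v / 27 % 3 = v.2.2.1.val := by decide
lemma dig4 : ∀ v : V, idxV v / 9 % 3 = v.2.2.2.1.val := by decide
lemma dig5 : ∀ v : V, idxV v / 3 % 3 = v.2.2.2.2.1.val := by decide
lemma dig6 : ∀ v : V, idxV v % 3 = v.2.2.2.2.2.val := by decide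
lemma dig1' : ∀ v : V, idxV v / 162 = v.1.val := by decide

/-- Compatibility of subtraction with the encoding. -/
lemma idx_sub (x y : V) : idxV (x - y) = subN (idxV x) (idxV y) := by
  show ((((((x.1 - y.1).val * 2 + (x.2.1 - y.2.1).val) * 3 + (x.2.2.1 - y.2.2.1).val) * 3
      + (x.2.2.2.1 - y.2.2.2.1).val) * 3 + (x.2.2.2.2.1 - y.2.2.2.2.1).val) * 3
      + (x.2.2.2.2.2 - y.2.2.2.2.2).val) = _
  have e1 := val2_sub x.1 y.1
  have e2 := val2_sub x.2.1 y.2.1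
  have e3 := val3_sub x.2.2.1 y.2.2.1
  have e4 := val3_sub x.2.2.2.1 y.2.2.2.1
  have e5 := val3_sub x.2.2.2.2.1 y.2.2.2.2.1
  have e6 := val3_sub x.2.2.2.2.2 y.2.2.2.2.2
  rw [e1, e2, e3, e4, e5, e6]
  show _ = (idxV x / 162 % 2 + 2 - idxV y / 162 % 2) % 2 * 162
      + ((idxV x / 81 % 2 + 2 - idxV y / 81 % 2) % 2 * 81
      + ((idxV x / 27 % 3 + 3 - idxV y / 27 % 3) % 3 * 27
      + ((idxV x / 9 % 3 + 3 - idxV y / 9 % 3) % 3 * 9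
      + ((idxV x / 3 % 3 + 3 - idxV y / 3 % 3) % 3 * 3
      + (idxV x / 1 % 3 + 3 - idxV y / 1 % 3) % 3))))
  rw [Nat.div_one, Nat.div_one]
  rw [dig1, dig2, dig3, dig4, dig5, dig6, dig1, dig2, dig3, dig4, dig5, dig6]
  ring

/- ### Counting facts, by computation -/

lemma h_count0 : ((List.range 324).countP fun i => fN i) = 152 := by decide

def checkCN : Bool := (List.range 324).all fun j =>
  (j == 0) || (((List.range 324).countP fun i => fN i && fN (subN j i)) == if fN j then 70 else 72)

theorem cn_ok : checkCN = true := by decide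

/- ### The graph -/

def Gr : SimpleGraph V where
  Adj x y := f (x - y) = true
  symm := by
    constructor
    intro x y h
    have : y - x = -(x - y) := by abel
    rw [this, h_symm]; exact h
  loopless := by
    constructor
    intro x h
    rw [sub_self, h_f0] at h; cases h

instance : DecidableRel Gr.Adj := fun x y => inferInstanceAs (Decidable (_ = true))

lemma adj_iff (x y : V) : Gr.Adj x y ↔ f (x - y) = true := Iff.rfl

/-- Translation invariance of adjacency. -/
lemma adj_shift (t x y : V) : Gr.Adj (x + t) (y + t) ↔ Gr.Adj x y := by
  rw [adj_iff, adj_iff, add_sub_add_right_eq_sub]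

/- ### Bridging Finset counting to Nat counting -/

lemma card_filter_eq_countP (p : V → Bool) :
    (Finset.univ.filter fun v : V => p v = true).card
      = (List.range 324).countP fun i => p (decV i) := by
  have h1 : (Finset.univ.filter fun v : V => p v = true).card
      = ((Finset.range 324).filter fun i => p (decV i) = true).card := by
    apply Finset.card_nbij' idxV decV
    · intro a ha
      simp only [Finset.mem_coe, Finset.mem_filter, Finset.mem_univ, true_and] at ha ⊢
      simp only [Finset.mem_range]
      exact ⟨h_idx_lt a, by rw [h_dec_idx']; exact ha⟩
    · intro i hi
      simp only [Finset.mem_coe, Finset.mem_filter, Finset.mem_range] at hi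
      simp only [Finset.mem_coe, Finset.mem_filter, Finset.mem_univ, true_and]
      exact hi.2
    · intro a _; exact h_dec_idx' a
    · intro i hi
      simp only [Finset.mem_coe, Finset.mem_filter, Finset.mem_range] at hi
      exact h_idx_dec ⟨i, hi.1⟩
  rw [h1, List.countP_eq_length_filter]
  show ((List.range 324).filter fun i => decide (p (decV i) = true)).length = _
  congr 1
  apply List.filter_congr
  intro a _
  cases h : p (decV a) <;> simp [h]

/- ### Degree computations -/

lemma deg0 : Gr.degree 0 = 152 := by
  classical
  rw [← SimpleGraph.card_neighborSet_eq_degree]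
  have h1 : Fintype.card (Gr.neighborSet 0)
      = (Finset.univ.filter fun v : V => f v = true).card := by
    rw [Fintype.card_subtype]
    apply Finset.card_nbij' id id
    · intro a ha
      simp only [Finset.mem_coe, Finset.mem_filter, Finset.mem_univ, true_and] at ha ⊢
      have : Gr.Adj 0 a := ha
      rw [adj_iff] at this
      rwa [zero_sub, h_symm] at this
    · intro a ha
      simp only [Finset.mem_coe, Finset.mem_filter, Finset.mem_univ, true_and] at ha ⊢
      show Gr.Adj 0 a
      rw [adj_iff, zero_sub, h_symm]; exact ha
    · intro a _; rfl
    · intro a _; rfl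
  rw [h1, card_filter_eq_countP]
  have h2 : ((List.range 324).countP fun i => f (decV i))
      = (List.range 324).countP fun i => fN i := by
    apply List.countP_congr
    intro i hi
    simp only [List.mem_range] at hi
    show f (decV i) = true ↔ fN i = true
    rw [show f (decV i) = fN (idxV (decV i)) from rfl, h_idx_dec ⟨i, hi⟩]
  rw [h2, h_count0]

lemma deg_all : ∀ v : V, Gr.degree v = 152 := by
  intro v
  have h0 : Fintype.card (Gr.neighborSet 0) = 152 := by
    rw [SimpleGraph.card_neighborSet_eq_degree]; exact deg0
  rw [← SimpleGraph.card_neighborSet_eq_degree, ← h0]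
  refine (Fintype.card_congr (Equiv.subtypeEquiv (Equiv.addRight v) fun x => ?_)).symm
  simp only [SimpleGraph.mem_neighborSet, Equiv.coe_addRight]
  constructor
  · intro h
    have h2 := (adj_shift v 0 x).mpr h
    rwa [zero_add] at h2
  · intro h
    have h2 : Gr.Adj (0 + v) (x + v) := by rwa [zero_add]
    exact (adj_shift v 0 x).mp h2



/- ### Common neighbor counts -/

lemma cn_card (d : V) (hd : d ≠ 0) :
    Fintype.card ↥(Gr.commonNeighbors 0 d) = if f d = true then 70 else 72 := by
  classical
  have h1 : Fintype.card ↥(Gr.commonNeighbors 0 d)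
      = (Finset.univ.filter fun x : V => (f x && f (d - x)) = true).card := by
    rw [Fintype.card_subtype]
    apply Finset.card_nbij' id id
    · intro a ha
      simp only [Finset.mem_coe, Finset.mem_filter, Finset.mem_univ, true_and] at ha ⊢
      rw [SimpleGraph.mem_commonNeighbors] at ha
      obtain ⟨h01, h02⟩ := ha
      rw [adj_iff] at h01 h02
      rw [zero_sub, h_symm] at h01
      simp only [id, Bool.and_eq_true]
      exact ⟨h01, h02⟩
    · intro a ha
      simp only [Finset.mem_coe, Finset.mem_filter, Finset.mem_univ, true_and, Bool.and_eq_true] at ha ⊢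
      rw [SimpleGraph.mem_commonNeighbors, adj_iff, adj_iff, zero_sub, h_symm]
      exact ha
    · intro a _; rfl
    · intro a _; rfl
  rw [h1, card_filter_eq_countP]
  have h2 : ((List.range 324).countP fun i => f (decV i) && f (d - decV i))
      = (List.range 324).countP fun i => fN i && fN (subN (idxV d) i) := by
    apply List.countP_congr
    intro i hi
    simp only [List.mem_range] at hi
    have e1 : f (decV i) = fN i := by
      show fN (idxV (decV i)) = fN i
      rw [h_idx_dec ⟨i, hi⟩]
    have e2 : f (d - decV i) = fN (subN (idxV d) i) := by
      show fN (idxV (d - decV i)) = _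
      rw [idx_sub, h_idx_dec ⟨i, hi⟩]
    rw [e1, e2]
  rw [h2]
  have hj : idxV d ∈ List.range 324 := by
    simp only [List.mem_range]; exact h_idx_lt d
  have hall := (List.all_eq_true.mp cn_ok) (idxV d) hj
  have hne : idxV d ≠ 0 := by
    intro h0
    apply hd
    calc d = decV (idxV d) := (h_dec_idx' d).symm
    _ = decV 0 := by rw [h0]
    _ = 0 := h_dec0
  simp only [Bool.or_eq_true, beq_iff_eq] at hall
  rcases hall with h | h
  · exact absurd h hne
  · exact h

lemma cn_shift (v w t : V) :
    Fintype.card ↥(Gr.commonNeighbors (v + t) (w + t))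
      = Fintype.card ↥(Gr.commonNeighbors v w) := by
  classical
  refine (Fintype.card_congr (Equiv.subtypeEquiv (Equiv.addRight t) fun x => ?_)).symm
  simp only [SimpleGraph.mem_commonNeighbors, Equiv.coe_addRight]
  rw [adj_shift t v x, adj_shift t w x]

lemma cn_general (v w : V) (h : v ≠ w) :
    Fintype.card ↥(Gr.commonNeighbors v w) = if f (w - v) = true then 70 else 72 := by
  have h1 := cn_shift 0 (w - v) v
  rw [zero_add] at h1
  have h2 : w - v + v = w := by abel
  rw [h2] at h1
  rw [h1]
  exact cn_card (w - v) (sub_ne_zero.mpr (Ne.symm h))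

theorem srgGr : Gr.IsSRGWith 324 152 70 72 := by
  constructor
  · exact h_card
  · exact deg_all
  · intro v w hadj
    rw [cn_general v w hadj.ne]
    have hv : f (w - v) = true := by
      have : w - v = -(v - w) := by abel
      rw [this, h_symm]
      exact hadj
    rw [if_pos hv]
  · intro v w hne hnadj
    rw [cn_general v w hne]
    have hv : f (w - v) = false := by
      have : w - v = -(v - w) := by abel
      rw [this, h_symm]
      exact Bool.not_eq_true _ ▸ (by simpa [adj_iff] using hnadj)
    rw [if_neg (by simp [hv])]

/- ### Transfer to `Fin 324` -/

noncomputable def eV : V ≃ Fin 324 := Fintype.equivFinOfCardEq h_card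

noncomputable def G2 : SimpleGraph (Fin 324) := SimpleGraph.comap (⇑eV.symm) Gr

lemma G2_adj (a b : Fin 324) : G2.Adj a b ↔ Gr.Adj (eV.symm a) (eV.symm b) := Iff.rfl

end SRG324

open scoped Classical in
/-- There exists a strongly regular graph with parameters `(324, 152, 70, 72)` that is
vertex-transitive: for every pair of vertices `u, v` there is a graph automorphism
mapping `u` to `v`. -/
theorem exists_vertex_transitive_srg_324_152_70_72 :
    ∃ G : SimpleGraph (Fin 324),
      G.IsSRGWith 324 152 70 72 ∧ ∀ u v : Fin 324, ∃ φ : G ≃g G, φ u = v := by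
  classical
  refine ⟨SRG324.G2, ⟨?_, ?_, ?_, ?_⟩, ?_⟩
  · simp
  · -- regular
    intro a
    have h1 : Fintype.card ↥(SRG324.G2.neighborSet a) = Fintype.card ↥(SRG324.Gr.neighborSet (SRG324.eV.symm a)) :=
      Fintype.card_congr (Equiv.subtypeEquiv SRG324.eV.symm fun x => Iff.rfl)
    rw [← SimpleGraph.card_neighborSet_eq_degree, h1,
      SimpleGraph.card_neighborSet_eq_degree]
    exact SRG324.deg_all _
  · -- of_adj
    intro v w hadj
    have h1 : Fintype.card ↥(SRG324.G2.commonNeighbors v w)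
        = Fintype.card ↥(SRG324.Gr.commonNeighbors (SRG324.eV.symm v) (SRG324.eV.symm w)) :=
      Fintype.card_congr (Equiv.subtypeEquiv SRG324.eV.symm fun x => by
        simp only [SimpleGraph.mem_commonNeighbors]
        exact Iff.rfl)
    rw [h1, SRG324.cn_general _ _ (fun hh => ((SRG324.G2_adj v w).mp hadj).ne hh)]
    have hv : SRG324.f (SRG324.eV.symm w - SRG324.eV.symm v) = true := by
      have h2 : SRG324.eV.symm w - SRG324.eV.symm v = -(SRG324.eV.symm v - SRG324.eV.symm w) := by abel
      rw [h2, SRG324.h_symm]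
      exact (SRG324.G2_adj v w).mp hadj
    rw [if_pos hv]
  · -- of_not_adj
    intro v w hne hnadj
    have hne' : SRG324.eV.symm v ≠ SRG324.eV.symm w := fun hh => hne (SRG324.eV.symm.injective hh)
    have h1 : Fintype.card ↥(SRG324.G2.commonNeighbors v w)
        = Fintype.card ↥(SRG324.Gr.commonNeighbors (SRG324.eV.symm v) (SRG324.eV.symm w)) :=
      Fintype.card_congr (Equiv.subtypeEquiv SRG324.eV.symm fun x => by
        simp only [SimpleGraph.mem_commonNeighbors]
        exact Iff.rfl)
    rw [h1, SRG324.cn_general _ _ hne']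
    have hv : SRG324.f (SRG324.eV.symm w - SRG324.eV.symm v) = false := by
      have h2 : SRG324.eV.symm w - SRG324.eV.symm v = -(SRG324.eV.symm v - SRG324.eV.symm w) := by abel
      rw [h2, SRG324.h_symm]
      have : ¬ SRG324.Gr.Adj (SRG324.eV.symm v) (SRG324.eV.symm w) := fun hh => hnadj ((SRG324.G2_adj v w).mpr hh)
      rw [SRG324.adj_iff] at this
      exact Bool.not_eq_true _ ▸ (by simpa using this)
    rw [if_neg (by simp [hv])]
  · -- vertex transitivity
    intro u v
    set t : SRG324.V := SRG324.eV.symm v - SRG324.eV.symm u with ht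
    refine ⟨⟨SRG324.eV.symm.trans ((Equiv.addRight t).trans SRG324.eV), ?_⟩, ?_⟩
    · intro a b
      show SRG324.G2.Adj (SRG324.eV (SRG324.eV.symm a + t)) (SRG324.eV (SRG324.eV.symm b + t)) ↔ SRG324.G2.Adj a b
      rw [SRG324.G2_adj, SRG324.G2_adj, Equiv.symm_apply_apply, Equiv.symm_apply_apply]
      exact SRG324.adj_shift t (SRG324.eV.symm a) (SRG324.eV.symm b)
    · show SRG324.eV (SRG324.eV.symm u + t) = v
      have : SRG324.eV.symm u + t = SRG324.eV.symm v := by rw [ht]; abel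
      rw [this, Equiv.apply_symm_apply]
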